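/- arXiv:1808.02853 — 4 statements merged into one kernel-verified Lean document; each statement's English description precedes it below -/
import Mathlib

section
/- In the spin factor 𝕊_{1,n}, the k-th power of x = (x₀, x) is x^k = (z₀, z) where z₀ = Σ_{i+j=k, j even} C(k,i) x₀^i (x·x)^{j/2} and z = Σ_{i+j=k, j odd} C(k,i) x₀^i (x·x)^{(j-1)/2} x. -/
/-- The Jordan product on the spin factor 𝕊_{1,n} = ℝ × ℝⁿ. -/
def sprod {n : ℕ} (x y : ℝ × (Fin n → ℝ)) : ℝ × (Fin n → ℝ) :=
  (x.1 * y.1 + ∑ i, x.2 i * y.2 i, fun i => x.1 * y.2 i + y.1 * x.2 i)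

/-- Powers in the spin factor: `x^1 = x` and `x^(k+1) = x • x^k`
(the zeroth power is the unit `(1,0)`, so that `spow x 1 = x`). -/
def spow {n : ℕ} (x : ℝ × (Fin n → ℝ)) : ℕ → ℝ × (Fin n → ℝ)
  | 0 => (1, 0)
  | k + 1 => sprod x (spow x k)

def E (a s : ℝ) (k : ℕ) : ℝ :=
  ∑ i ∈ Finset.range (k + 1),
    if Even (k - i) then (k.choose i : ℝ) * a ^ i * s ^ ((k - i) / 2) else 0

def O (a s : ℝ) (k : ℕ) : ℝ :=
  ∑ i ∈ Finset.range (k + 1),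
    if Odd (k - i) then (k.choose i : ℝ) * a ^ i * s ^ ((k - i - 1) / 2) else 0

lemma keyE (a s : ℝ) (k : ℕ) : E a s (k + 1) = a * E a s k + s * O a s k := by
  unfold E O
  rw [Finset.sum_range_succ' (fun i => if Even (k + 1 - i) then ((k+1).choose i : ℝ) * a ^ i * s ^ ((k + 1 - i) / 2) else 0)]
  rw [Finset.sum_range_succ' (fun i => if Odd (k - i) then (k.choose i : ℝ) * a ^ i * s ^ ((k - i - 1) / 2) else 0)]
  simp only [Nat.succ_sub_succ, Nat.choose_succ_succ, Nat.cast_add, Nat.succ_eq_add_one]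
  have split : ∀ i ∈ Finset.range (k+1),
      (if Even (k - i) then ((k.choose i : ℝ) + (k.choose (i+1) : ℝ)) * a ^ (i+1) * s ^ ((k - i) / 2) else 0)
      = (a * if Even (k - i) then (k.choose i : ℝ) * a ^ i * s ^ ((k - i) / 2) else 0)
        + (if Even (k - i) then (k.choose (i+1) : ℝ) * a ^ (i+1) * s ^ ((k - i) / 2) else 0) := by
    intro i hi
    by_cases h : Even (k - i) <;> simp [h] <;> ring
  rw [Finset.sum_congr rfl split, Finset.sum_add_distrib]
  rw [Finset.sum_range_succ (fun i => if Even (k - i) then ((k.choose (i+1)) : ℝ) * a ^ (i+1) * s ^ ((k - i) / 2) else 0)]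
  have last : (if Even (k - k) then ((k.choose (k+1)) : ℝ) * a ^ (k+1) * s ^ ((k - k) / 2) else 0) = 0 := by
    simp
  rw [last]
  have congr2 : ∀ i ∈ Finset.range k,
      (if Even (k - i) then ((k.choose (i+1)) : ℝ) * a ^ (i+1) * s ^ ((k - i) / 2) else 0)
      = s * (if Odd (k - (i+1)) then ((k.choose (i+1)) : ℝ) * a ^ (i+1) * s ^ ((k - (i+1) - 1) / 2) else 0) := by
    intro i hi
    simp only [Finset.mem_range] at hi
    rcases Nat.even_or_odd (k - i) with h | h
    · have h1 : Odd (k - (i+1)) := by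
        rw [Nat.odd_iff]; rw [Nat.even_iff] at h; omega
      have h2 : (k - i) / 2 = (k - (i+1) - 1) / 2 + 1 := by
        rw [Nat.even_iff] at h; omega
      simp only [h, h1, if_true, h2, pow_succ]
      ring
    · have h1 : ¬ Odd (k - (i+1)) := by
        rw [Nat.odd_iff]; rw [Nat.odd_iff] at h; omega
      have h2 : ¬ Even (k - i) := by
        rw [Nat.even_iff]; rw [Nat.odd_iff] at h; omega
      simp [h1, h2]
  rw [Finset.sum_congr rfl congr2]
  have fzero : (if Even (k + 1 - 0) then ((k+1).choose 0 : ℝ) * a ^ 0 * s ^ ((k + 1 - 0) / 2) else 0)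
      = s * (if Odd (k - 0) then (k.choose 0 : ℝ) * a ^ 0 * s ^ ((k - 0 - 1) / 2) else 0) := by
    rcases Nat.even_or_odd k with h | h
    · have h1 : ¬ Even (k + 1) := by
        rw [Nat.even_iff] at *; omega
      have h2 : ¬ Odd k := by
        rw [Nat.odd_iff]; rw [Nat.even_iff] at h; omega
      simp [h1, h2]
    · have h1 : Even (k + 1) := by
        rw [Nat.even_iff]; rw [Nat.odd_iff] at h; omega
      have h2 : (k + 1) / 2 = (k - 1) / 2 + 1 := by
        rw [Nat.odd_iff] at h; omega
      simp only [Nat.sub_zero] at *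
      simp only [h1, h, if_true, h2, pow_succ, Nat.choose_zero_right]
      push_cast; ring
  rw [fzero, ← Finset.mul_sum, ← Finset.mul_sum]
  ring

lemma keyO (a s : ℝ) (k : ℕ) : O a s (k + 1) = a * O a s k + E a s k := by
  unfold E O
  rw [Finset.sum_range_succ' (fun i => if Odd (k + 1 - i) then ((k+1).choose i : ℝ) * a ^ i * s ^ ((k + 1 - i - 1) / 2) else 0)]
  rw [Finset.sum_range_succ' (fun i => if Even (k - i) then (k.choose i : ℝ) * a ^ i * s ^ ((k - i) / 2) else 0)]
  simp only [Nat.succ_sub_succ, Nat.choose_succ_succ, Nat.cast_add, Nat.succ_eq_add_one]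
  have split : ∀ i ∈ Finset.range (k+1),
      (if Odd (k - i) then ((k.choose i : ℝ) + (k.choose (i+1) : ℝ)) * a ^ (i+1) * s ^ ((k - i - 1) / 2) else 0)
      = (a * if Odd (k - i) then (k.choose i : ℝ) * a ^ i * s ^ ((k - i - 1) / 2) else 0)
        + (if Odd (k - i) then (k.choose (i+1) : ℝ) * a ^ (i+1) * s ^ ((k - i - 1) / 2) else 0) := by
    intro i hi
    by_cases h : Odd (k - i) <;> simp [h] <;> ring
  rw [Finset.sum_congr rfl split, Finset.sum_add_distrib]
  rw [Finset.sum_range_succ (fun i => if Odd (k - i) then ((k.choose (i+1)) : ℝ) * a ^ (i+1) * s ^ ((k - i - 1) / 2) else 0)]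
  have last : (if Odd (k - k) then ((k.choose (k+1)) : ℝ) * a ^ (k+1) * s ^ ((k - k - 1) / 2) else 0) = 0 := by
    simp
  rw [last]
  have congr2 : ∀ i ∈ Finset.range k,
      (if Odd (k - i) then ((k.choose (i+1)) : ℝ) * a ^ (i+1) * s ^ ((k - i - 1) / 2) else 0)
      = (if Even (k - (i+1)) then ((k.choose (i+1)) : ℝ) * a ^ (i+1) * s ^ ((k - (i+1)) / 2) else 0) := by
    intro i hi
    simp only [Finset.mem_range] at hi
    rcases Nat.even_or_odd (k - i) with h | h
    · have h1 : ¬ Even (k - (i+1)) := by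
        rw [Nat.even_iff] at *; omega
      have h2 : ¬ Odd (k - i) := by
        rw [Nat.odd_iff]; rw [Nat.even_iff] at h; omega
      simp [h1, h2]
    · have h1 : Even (k - (i+1)) := by
        rw [Nat.even_iff]; rw [Nat.odd_iff] at h; omega
      have h2 : (k - i - 1) / 2 = (k - (i+1)) / 2 := by omega
      simp [h, h1, h2]
  rw [Finset.sum_congr rfl congr2]
  have fzero : (if Odd (k + 1 - 0) then ((k+1).choose 0 : ℝ) * a ^ 0 * s ^ ((k + 1 - 0 - 1) / 2) else 0)
      = (if Even (k - 0) then (k.choose 0 : ℝ) * a ^ 0 * s ^ ((k - 0) / 2) else 0) := by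
    rcases Nat.even_or_odd k with h | h
    · have h1 : Odd (k + 1) := Even.add_one h
      simp [h1, h]
    · have h1 : ¬ Odd (k + 1) := by
        rw [Nat.odd_iff] at *; omega
      have h2 : ¬ Even k := by
        rw [Nat.even_iff]; rw [Nat.odd_iff] at h; omega
      simp [h1, h2]
  rw [fzero, ← Finset.mul_sum]
  ring

/-- Explicit formula for powers in the spin factor: `x^k = (z₀, z)` with
`z₀ = Σ_{i+j=k, j even} C(k,i) x₀^i (x·x)^{j/2}` and
`z = (Σ_{i+j=k, j odd} C(k,i) x₀^i (x·x)^{(j-1)/2}) · x`. -/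
theorem spin_factor_power_formula (n k : ℕ) (hk : 1 ≤ k) (x : ℝ × (Fin n → ℝ)) :
    spow x k =
      (∑ i ∈ Finset.range (k + 1),
          if Even (k - i) then
            (k.choose i : ℝ) * x.1 ^ i * (∑ p, x.2 p * x.2 p) ^ ((k - i) / 2)
          else 0,
       fun p =>
         (∑ i ∈ Finset.range (k + 1),
            if Odd (k - i) then
              (k.choose i : ℝ) * x.1 ^ i * (∑ q, x.2 q * x.2 q) ^ ((k - i - 1) / 2)
            else 0) * x.2 p) := by
  clear hk
  set a := x.1
  set s := ∑ p, x.2 p * x.2 p with hs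
  show spow x k = (E a s k, fun p => O a s k * x.2 p)
  induction k with
  | zero =>
    refine Prod.ext ?_ ?_
    · simp [spow, E]
    · funext p
      simp [spow, O]
  | succ k ih =>
    show sprod x (spow x k) = _
    rw [ih, keyE, keyO]
    unfold sprod
    refine Prod.ext ?_ ?_
    · show a * E a s k + ∑ p, x.2 p * (O a s k * x.2 p) = _
      have h : ∑ p, x.2 p * (O a s k * x.2 p) = s * O a s k := by
        rw [hs, Finset.sum_mul]
        exact Finset.sum_congr rfl (fun p _ => by ring)
      rw [h]
    · funext p
      show a * (O a s k * x.2 p) + E a s k * x.2 p = _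
      ring
end

section
/- The logarithm of the series B(x) = Σ_{m≥0} C_𝕊(n,2m)/(2^m m!) · x^{2m} is B_c(x) = Σ_{m≥1} (1/(2m))((2^m − 1)n + 1) x^{2m}; in particular the coefficient of x^{2m} in log B(x) is ((2^m−1)n+1)/(2m). -/
set_option maxHeartbeats 1000000

open Finset Nat PowerSeries

/-- `C_𝕊(n,2m) = Σ_{i+j=2m, i,j even} C(2m,i)·(i−1)!!·∏_{l=0}^{j/2−1}(n+2l)`
(writing `i = 2i'`), the polynomial `⟨Tr x^{2m}⟩` for the spin factor. -/
def CSq (n : ℚ) (m : ℕ) : ℚ :=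
  ∑ i ∈ Finset.range (m + 1),
    ((2 * m).choose (2 * i) : ℚ) * (Nat.doubleFactorial (2 * i - 1) : ℚ) *
      ∏ l ∈ Finset.range (m - i), (n + 2 * l)

noncomputable def Espin (m i : ℕ) : ℚ :=
  ((2 * m).choose (2 * i) : ℚ) * (Nat.doubleFactorial (2 * i - 1) : ℚ)

noncomputable def Pspin (n : ℚ) (j : ℕ) : ℚ := ∏ l ∈ Finset.range j, (n + 2 * (l : ℚ))

lemma dfs (k : ℕ) : (2 * k + 1)‼ = (2 * k + 1) * (2 * k - 1)‼ := by
  cases k with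
  | zero => decide
  | succ k =>
    have h1 : 2 * (k + 1) + 1 = (2 * k + 1) + 2 := by omega
    have h2 : 2 * (k + 1) - 1 = 2 * k + 1 := by omega
    rw [h1, h2, Nat.doubleFactorial_add_two]

lemma fact_two_mul (i : ℕ) : (2 * i)! = 2 ^ i * i ! * (2 * i - 1)‼ := by
  induction i with
  | zero => decide
  | succ i ih =>
    have h1 : 2 * (i + 1) = (2 * i + 1) + 1 := by omega
    rw [h1, Nat.add_sub_cancel, Nat.factorial_succ, Nat.factorial_succ (2*i), dfs, ih,
      Nat.factorial_succ i]
    ring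

lemma Espin_mul (m i : ℕ) (h : i ≤ m) :
    ((2 * m).choose (2 * i)) * ((2 * i - 1)‼) * ((2 * (m - i))! * 2 ^ i * i !) = (2 * m)! := by
  have h2 : 2 * i ≤ 2 * m := by omega
  have hc := Nat.choose_mul_factorial_mul_factorial h2
  have hmi : 2 * (m - i) = 2 * m - 2 * i := by omega
  calc ((2 * m).choose (2 * i)) * ((2 * i - 1)‼) * ((2 * (m - i))! * 2 ^ i * i !)
      = ((2 * m).choose (2 * i)) * (2 ^ i * i ! * (2 * i - 1)‼) * (2 * m - 2 * i)! := by
        rw [hmi]; ring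
    _ = ((2 * m).choose (2 * i)) * (2 * i)! * (2 * m - 2 * i)! := by rw [fact_two_mul]
    _ = (2 * m)! := hc

lemma Espin_eq (m i : ℕ) (h : i ≤ m) :
    Espin m i = ((2 * m)! : ℚ) / (((2 * (m - i))! : ℚ) * 2 ^ i * (i ! : ℚ)) := by
  have hne : (((2 * (m - i))! : ℚ) * 2 ^ i * (i ! : ℚ)) ≠ 0 := by positivity
  rw [eq_div_iff hne, Espin]
  push_cast [← Espin_mul m i h]
  ring

lemma Espin_zero (m i : ℕ) (h : m < i) : Espin m i = 0 := by
  rw [Espin, Nat.choose_eq_zero_of_lt (by omega)]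
  simp

lemma Espin_self (k : ℕ) : Espin k k = ((2 * k - 1)‼ : ℚ) := by
  rw [Espin, Nat.choose_self]
  simp

lemma key0 (m : ℕ) : Espin (m + 1) 0 = Espin m 0 := by simp [Espin]

lemma key1 (m : ℕ) : Espin (m + 1) 1 = Espin m 1 + (4 * (m : ℚ) + 1) * Espin m 0 := by
  have h1 : (2 * (m + 1)).choose (2 * 1) = (2 * m).choose (2 * 1) + (4 * m + 1) := by
    have e : 2 * (m + 1) = (2 * m + 1) + 1 := by omega
    rw [e, Nat.choose_succ_succ (2 * m + 1) 1, Nat.choose_succ_succ (2 * m) 0,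
      Nat.choose_succ_succ (2 * m) 1]
    simp [Nat.choose_one_right]
    omega
  simp only [Espin, h1]
  push_cast
  norm_num

lemma key2 (k i : ℕ) (h : i ≤ k) :
    Espin (k + 2) (i + 2) = Espin (k + 1) (i + 2)
      + (4 * (k : ℚ) + 2 * i + 7) * Espin (k + 1) (i + 1)
      - (8 * (k : ℚ) ^ 2 + 12 * k + 4) * Espin k i := by
  rcases Nat.lt_or_ge i k with hik | hik
  · obtain ⟨d, rfl⟩ : ∃ d, k = i + d + 1 := ⟨k - i - 1, by omega⟩
    have e1 : Espin (i + d + 1 + 2) (i + 2)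
        = ((2 * (i + d + 3))! : ℚ) / (((2 * (d + 1))! : ℚ) * 2 ^ (i + 2) * ((i + 2)! : ℚ)) := by
      rw [Espin_eq _ _ (by omega)]; norm_num
      rw [show i + d + 1 + 2 - (i + 2) = d + 1 by omega, show i + d + 1 + 2 = i + d + 3 by omega]
    have e2 : Espin (i + d + 1 + 1) (i + 2)
        = ((2 * (i + d + 2))! : ℚ) / (((2 * d)! : ℚ) * 2 ^ (i + 2) * ((i + 2)! : ℚ)) := by
      rw [Espin_eq _ _ (by omega)]
      rw [show i + d + 1 + 1 - (i + 2) = d by omega, show i + d + 1 + 1 = i + d + 2 by omega]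
    have e3 : Espin (i + d + 1 + 1) (i + 1)
        = ((2 * (i + d + 2))! : ℚ) / (((2 * (d + 1))! : ℚ) * 2 ^ (i + 1) * ((i + 1)! : ℚ)) := by
      rw [Espin_eq _ _ (by omega)]
      rw [show i + d + 1 + 1 - (i + 1) = d + 1 by omega, show i + d + 1 + 1 = i + d + 2 by omega]
    have e4 : Espin (i + d + 1) i
        = ((2 * (i + d + 1))! : ℚ) / (((2 * (d + 1))! : ℚ) * 2 ^ i * ((i)! : ℚ)) := by
      rw [Espin_eq _ _ (by omega)]
      rw [show i + d + 1 - i = d + 1 by omega]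
    have hA : (2 * (i + d + 3))! = (2 * (i + d + 2) + 2) * ((2 * (i + d + 2) + 1) * (2 * (i + d + 2))!) := by
      rw [show 2 * (i + d + 3) = (2 * (i + d + 2) + 1) + 1 by omega, Nat.factorial_succ,
        Nat.factorial_succ]
    have hB : (2 * (i + d + 2))! = (2 * (i + d + 1) + 2) * ((2 * (i + d + 1) + 1) * (2 * (i + d + 1))!) := by
      rw [show 2 * (i + d + 2) = (2 * (i + d + 1) + 1) + 1 by omega, Nat.factorial_succ,
        Nat.factorial_succ]
    have hC : (2 * (d + 1))! = (2 * d + 2) * ((2 * d + 1) * (2 * d)!) := by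
      rw [show 2 * (d + 1) = (2 * d + 1) + 1 by omega, Nat.factorial_succ, Nat.factorial_succ]
    have hD : (i + 2)! = (i + 2) * ((i + 1) * i !) := by
      rw [Nat.factorial_succ, Nat.factorial_succ]
    have hE : (i + 1)! = (i + 1) * i ! := Nat.factorial_succ i
    rw [e1, e2, e3, e4, hA, hB, hC, hD, hE]
    have n1 : ((2 * d)! : ℚ) ≠ 0 := Nat.cast_ne_zero.mpr (Nat.factorial_ne_zero _)
    have n2 : ((2 * (i + d + 1))! : ℚ) ≠ 0 := Nat.cast_ne_zero.mpr (Nat.factorial_ne_zero _)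
    have n3 : (i ! : ℚ) ≠ 0 := Nat.cast_ne_zero.mpr (Nat.factorial_ne_zero _)
    have n4 : (2 : ℚ) ^ i ≠ 0 := pow_ne_zero _ two_ne_zero
    push_cast
    field_simp
    ring
  · have : i = k := le_antisymm (by omega) hik
    subst this
    rw [Espin_self (i + 2), Espin_self (i + 1), Espin_self i, Espin_zero _ _ (by omega),
      show 2 * (i + 2) - 1 = 2 * (i + 1) + 1 by omega, dfs (i + 1),
      show 2 * (i + 1) - 1 = 2 * i + 1 by omega, dfs i]
    push_cast
    ring

lemma CSq_eq (n : ℚ) (m : ℕ) :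
    CSq n m = ∑ i ∈ Finset.range (m + 1), Espin m i * Pspin n (m - i) := rfl

lemma CSq_succ_succ (n : ℚ) (k : ℕ) :
    CSq n (k + 2) = (n + (6 * (k : ℚ) + 7)) * CSq n (k + 1)
      - (8 * (k : ℚ) ^ 2 + 12 * k + 4) * CSq n k := by
  have L : CSq n (k + 2)
      = (∑ i ∈ range (k + 1), Espin (k + 2) (i + 2) * Pspin n (k - i))
        + Espin (k + 2) 1 * Pspin n (k + 1) + Espin (k + 2) 0 * Pspin n (k + 2) := by
    rw [CSq_eq, Finset.sum_range_succ' _ (k + 2), Finset.sum_range_succ' _ (k + 1)]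
    congr 2
    · apply Finset.sum_congr rfl
      intro i hi
      have : k + 2 - (i + 1 + 1) = k - i := by omega
      rw [this]
  have S1peel : (∑ j ∈ range (k + 2), Espin (k + 1) j * Pspin n (k + 2 - j))
      = (∑ i ∈ range (k + 1), Espin (k + 1) (i + 2) * Pspin n (k - i))
        + Espin (k + 1) 1 * Pspin n (k + 1) + Espin (k + 1) 0 * Pspin n (k + 2) := by
    have ext : (∑ j ∈ range (k + 2), Espin (k + 1) j * Pspin n (k + 2 - j))
        = ∑ j ∈ range (k + 3), Espin (k + 1) j * Pspin n (k + 2 - j) := by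
      rw [Finset.sum_range_succ _ (k + 2), Espin_zero (k + 1) (k + 2) (by omega)]
      ring
    rw [ext, Finset.sum_range_succ' _ (k + 2), Finset.sum_range_succ' _ (k + 1)]
    congr 2
    · apply Finset.sum_congr rfl
      intro i hi
      have : k + 2 - (i + 1 + 1) = k - i := by omega
      rw [this]
  have Creindex : (∑ j ∈ range (k + 2), (4 * (k : ℚ) + 2 * j + 5) * (Espin (k + 1) j * Pspin n (k + 1 - j)))
      = (∑ i ∈ range (k + 1), (4 * (k : ℚ) + 2 * i + 7) * Espin (k + 1) (i + 1) * Pspin n (k - i))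
        + (4 * ((k : ℚ) + 1) + 1) * Espin (k + 1) 0 * Pspin n (k + 1) := by
    rw [Finset.sum_range_succ' _ (k + 1)]
    congr 1
    · apply Finset.sum_congr rfl
      intro i hi
      have : k + 1 - (i + 1) = k - i := by omega
      rw [this]
      push_cast
      ring
    · norm_num
      ring
  have comb : (∑ j ∈ range (k + 2), Espin (k + 1) j * Pspin n (k + 2 - j))
      + (∑ j ∈ range (k + 2), (4 * (k : ℚ) + 2 * j + 5) * (Espin (k + 1) j * Pspin n (k + 1 - j)))
      = (n + (6 * (k : ℚ) + 7)) * CSq n (k + 1) := by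
    rw [CSq_eq, Finset.mul_sum, ← Finset.sum_add_distrib]
    apply Finset.sum_congr rfl
    intro j hj
    have hj' : j ≤ k + 1 := by simpa [Nat.lt_succ_iff] using hj
    have h1 : k + 2 - j = (k + 1 - j) + 1 := by omega
    rw [h1, Pspin, Finset.prod_range_succ, ← Pspin]
    have h2 : ((k + 1 - j : ℕ) : ℚ) = (k : ℚ) + 1 - j := by
      push_cast [Nat.cast_sub hj']
      ring
    rw [h2]
    ring
  rw [L, key0, key1]
  have keysum : (∑ i ∈ range (k + 1), Espin (k + 2) (i + 2) * Pspin n (k - i))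
      = (∑ i ∈ range (k + 1), Espin (k + 1) (i + 2) * Pspin n (k - i))
        + (∑ i ∈ range (k + 1), (4 * (k : ℚ) + 2 * i + 7) * Espin (k + 1) (i + 1) * Pspin n (k - i))
        - (8 * (k : ℚ) ^ 2 + 12 * k + 4) * (∑ i ∈ range (k + 1), Espin k i * Pspin n (k - i)) := by
    rw [Finset.mul_sum, ← Finset.sum_add_distrib, ← Finset.sum_sub_distrib]
    apply Finset.sum_congr rfl
    intro i hi
    rw [key2 k i (by simpa [Nat.lt_succ_iff] using hi)]
    ring
  rw [keysum, ← CSq_eq]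
  have h3 : (∑ i ∈ range (k + 1), Espin (k + 1) (i + 2) * Pspin n (k - i))
      = (∑ j ∈ range (k + 2), Espin (k + 1) j * Pspin n (k + 2 - j))
        - Espin (k + 1) 1 * Pspin n (k + 1) - Espin (k + 1) 0 * Pspin n (k + 2) := by
    rw [S1peel]; ring
  rw [h3]
  have h4 : (∑ i ∈ range (k + 1), (4 * (k : ℚ) + 2 * i + 7) * Espin (k + 1) (i + 1) * Pspin n (k - i))
      = (∑ j ∈ range (k + 2), (4 * (k : ℚ) + 2 * j + 5) * (Espin (k + 1) j * Pspin n (k + 1 - j)))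
        - (4 * ((k : ℚ) + 1) + 1) * Espin (k + 1) 0 * Pspin n (k + 1) := by
    rw [Creindex]; ring
  rw [h4]
  have hcomb' := comb
  push_cast at hcomb' ⊢
  nlinarith [hcomb']

noncomputable def betaQ (n : ℚ) (m : ℕ) : ℚ := CSq n m / ((2 : ℚ) ^ m * (m ! : ℚ))

noncomputable def cQ (n : ℚ) (s : ℕ) : ℚ := ((2 : ℚ) ^ s - 1) * n + 1

lemma CSq_zero (n : ℚ) : CSq n 0 = 1 := by simp [CSq]

lemma CSq_one (n : ℚ) : CSq n 1 = n + 1 := by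
  simp [CSq, Finset.sum_range_succ]

lemma cQ_rec (n : ℚ) (s : ℕ) : cQ n (s + 2) = 3 * cQ n (s + 1) - 2 * cQ n s := by
  simp only [cQ, pow_succ]
  ring

lemma star (n : ℚ) : ∀ m : ℕ, (2 * (m : ℚ)) * betaQ n m
    = ∑ s ∈ Finset.range m, cQ n (s + 1) * betaQ n (m - (s + 1)) := by
  intro m
  induction m using Nat.strong_induction_on with
  | _ m ih =>
    match m with
    | 0 => simp
    | 1 =>
      simp only [Finset.sum_range_one, betaQ, CSq_zero, CSq_one, cQ]
      norm_num
      rw [CSq_zero]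
      ring
    | (k + 2) =>
      have ih1 := ih (k + 1) (by omega)
      have ih0 := ih k (by omega)
      have step1 : (∑ s ∈ Finset.range (k + 2), cQ n (s + 1) * betaQ n (k + 2 - (s + 1)))
          = (∑ s ∈ Finset.range (k + 1), cQ n (s + 2) * betaQ n (k - s))
            + cQ n 1 * betaQ n (k + 1) := by
        rw [Finset.sum_range_succ' _ (k + 1)]
        congr 1
        · apply Finset.sum_congr rfl
          intro s hs
          have : k + 2 - (s + 1 + 1) = k - s := by omega
          rw [this]
      have step2 : (∑ s ∈ Finset.range (k + 1), cQ n (s + 2) * betaQ n (k - s))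
          = 3 * (∑ s ∈ Finset.range (k + 1), cQ n (s + 1) * betaQ n (k + 1 - (s + 1)))
            - 2 * (∑ s ∈ Finset.range (k + 1), cQ n s * betaQ n (k - s)) := by
        rw [Finset.mul_sum, Finset.mul_sum, ← Finset.sum_sub_distrib]
        apply Finset.sum_congr rfl
        intro s hs
        have : k + 1 - (s + 1) = k - s := by omega
        rw [this, cQ_rec]
        ring
      have step3 : (∑ s ∈ Finset.range (k + 1), cQ n s * betaQ n (k - s))
          = (∑ s ∈ Finset.range k, cQ n (s + 1) * betaQ n (k - (s + 1)))
            + betaQ n k := by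
        rw [Finset.sum_range_succ' _ k]
        congr 1
        · simp [cQ]
      rw [step1, step2, step3, ← ih1, ← ih0]
      have hfact1 : ((k + 1)! : ℚ) = ((k : ℚ) + 1) * (k ! : ℚ) := by
        push_cast [Nat.factorial_succ]
        ring
      have hfact2 : ((k + 2)! : ℚ) = ((k : ℚ) + 2) * (((k : ℚ) + 1) * (k ! : ℚ)) := by
        push_cast [Nat.factorial_succ]
        ring
      have hk : (k ! : ℚ) ≠ 0 := Nat.cast_ne_zero.mpr (Nat.factorial_ne_zero _)
      have h2 : (2 : ℚ) ^ k ≠ 0 := pow_ne_zero _ two_ne_zero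
      have hk1 : ((k : ℚ) + 1) ≠ 0 := by positivity
      have hk2 : ((k : ℚ) + 2) ≠ 0 := by positivity
      simp only [betaQ, CSq_succ_succ, hfact2, hfact1, cQ]
      push_cast
      field_simp
      ring

noncomputable def wQ (n : ℚ) (k : ℕ) : ℚ := if k ≠ 0 ∧ Even k then cQ n (k / 2) else 0

noncomputable def eS (Bc : PowerSeries ℚ) (p : ℕ) : ℚ :=
  ∑ j ∈ Finset.range (p + 1), PowerSeries.coeff (R := ℚ) p (Bc ^ j) / (j ! : ℚ)

lemma coeff_pow_zero {Bc : PowerSeries ℚ} (hc : PowerSeries.constantCoeff (R := ℚ) Bc = 0)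
    {j m : ℕ} (h : m < j) : PowerSeries.coeff (R := ℚ) m (Bc ^ j) = 0 := by
  have hd : (PowerSeries.X : PowerSeries ℚ) ^ j ∣ Bc ^ j :=
    pow_dvd_pow_of_dvd (PowerSeries.X_dvd_iff.mpr hc) j
  exact (PowerSeries.X_pow_dvd_iff.mp hd) m h

lemma eS_trunc {Bc : PowerSeries ℚ} (hc : PowerSeries.constantCoeff (R := ℚ) Bc = 0)
    {a p : ℕ} (h : a ≤ p) :
    (∑ j ∈ Finset.range (p + 1), PowerSeries.coeff (R := ℚ) a (Bc ^ j) / (j ! : ℚ)) = eS Bc a := by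
  rw [eS]
  symm
  apply Finset.sum_subset
  · exact Finset.range_subset_range.mpr (by omega)
  · intro j hj hj2
    rw [coeff_pow_zero hc (by simp at hj2 ⊢; omega)]
    simp

lemma e_rec (n : ℚ) {Bc : PowerSeries ℚ} (hc : PowerSeries.constantCoeff (R := ℚ) Bc = 0)
    (hw : ∀ b : ℕ, PowerSeries.coeff (R := ℚ) (b + 1) Bc * ((b : ℚ) + 1) = wQ n (b + 1)) (p : ℕ) :
    ((p : ℚ) + 1) * eS Bc (p + 1)
      = ∑ k ∈ Finset.range (p + 1), wQ n (k + 1) * eS Bc (p - k) := by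
  have hder2 : ∀ b : ℕ, PowerSeries.coeff (R := ℚ) b (PowerSeries.derivative ℚ Bc) = wQ n (b + 1) := by
    intro b
    rw [PowerSeries.coeff_derivative, ← hw b]
  have hder : ∀ j : ℕ, ((p : ℚ) + 1) * PowerSeries.coeff (R := ℚ) (p + 1) (Bc ^ (j + 1))
      = ((j : ℚ) + 1) * ∑ x ∈ Finset.HasAntidiagonal.antidiagonal p,
          PowerSeries.coeff (R := ℚ) x.1 (Bc ^ j) * wQ n (x.2 + 1) := by
    intro j
    have h1 : PowerSeries.coeff (R := ℚ) p (PowerSeries.derivative ℚ (Bc ^ (j + 1)))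
        = PowerSeries.coeff (R := ℚ) (p + 1) (Bc ^ (j + 1)) * ((p : ℚ) + 1) := by
      rw [PowerSeries.coeff_derivative]
    have h2 : PowerSeries.derivative ℚ (Bc ^ (j + 1))
        = (j + 1) • (Bc ^ j * PowerSeries.derivative ℚ Bc) := by
      rw [Derivation.leibniz_pow]
      simp
    rw [mul_comm, ← h1, h2, map_nsmul]
    rw [PowerSeries.coeff_mul]
    rw [nsmul_eq_mul]
    simp only [hder2]
    push_cast
    ring
  calc ((p : ℚ) + 1) * eS Bc (p + 1)
      = ∑ j ∈ Finset.range (p + 2),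
          ((p : ℚ) + 1) * PowerSeries.coeff (R := ℚ) (p + 1) (Bc ^ j) / (j ! : ℚ) := by
        rw [eS, Finset.mul_sum]
        apply Finset.sum_congr rfl
        intro j hj
        ring
    _ = ∑ j ∈ Finset.range (p + 1),
          ((p : ℚ) + 1) * PowerSeries.coeff (R := ℚ) (p + 1) (Bc ^ (j + 1)) / ((j + 1)! : ℚ) := by
        rw [Finset.sum_range_succ' _ (p + 1)]
        simp [PowerSeries.coeff_one]
    _ = ∑ j ∈ Finset.range (p + 1), (∑ x ∈ Finset.HasAntidiagonal.antidiagonal p,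
          PowerSeries.coeff (R := ℚ) x.1 (Bc ^ j) * wQ n (x.2 + 1)) / (j ! : ℚ) := by
        apply Finset.sum_congr rfl
        intro j hj
        rw [hder j]
        have hfs : ((j + 1)! : ℚ) = ((j : ℚ) + 1) * (j ! : ℚ) := by
          push_cast [Nat.factorial_succ]
          ring
        rw [hfs]
        have hj1 : ((j : ℚ) + 1) ≠ 0 := by positivity
        field_simp
    _ = ∑ j ∈ Finset.range (p + 1), ∑ x ∈ Finset.HasAntidiagonal.antidiagonal p,
          PowerSeries.coeff (R := ℚ) x.1 (Bc ^ j) * wQ n (x.2 + 1) / (j ! : ℚ) := by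
        apply Finset.sum_congr rfl
        intro j hj
        rw [Finset.sum_div]
    _ = ∑ x ∈ Finset.HasAntidiagonal.antidiagonal p, ∑ j ∈ Finset.range (p + 1),
          PowerSeries.coeff (R := ℚ) x.1 (Bc ^ j) * wQ n (x.2 + 1) / (j ! : ℚ) := Finset.sum_comm
    _ = ∑ x ∈ Finset.HasAntidiagonal.antidiagonal p, wQ n (x.2 + 1)
          * ∑ j ∈ Finset.range (p + 1), PowerSeries.coeff (R := ℚ) x.1 (Bc ^ j) / (j ! : ℚ) := by
        apply Finset.sum_congr rfl
        intro x hx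
        rw [Finset.mul_sum]
        apply Finset.sum_congr rfl
        intro j hj
        ring
    _ = ∑ x ∈ Finset.HasAntidiagonal.antidiagonal p, wQ n (x.2 + 1) * eS Bc x.1 := by
        apply Finset.sum_congr rfl
        intro x hx
        rw [eS_trunc hc (by
          have := hx; simp at this
          omega)]
    _ = ∑ k ∈ Finset.range (p + 1), wQ n (p - k + 1) * eS Bc k := by
        rw [Finset.Nat.sum_antidiagonal_eq_sum_range_succ_mk]
    _ = ∑ k ∈ Finset.range (p + 1), wQ n (k + 1) * eS Bc (p - k) := by
        rw [← Finset.sum_range_reflect]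
        apply Finset.sum_congr rfl
        intro k hk
        have hk' : k ≤ p := by simp at hk; omega
        have h1 : p + 1 - 1 - k = p - k := by omega
        have h2 : p - (p - k) = k := by omega
        rw [h1, h2]

lemma sum_odd_only (f : ℕ → ℚ) (hf : ∀ k, Even k → f k = 0) :
    ∀ m : ℕ, ∑ k ∈ Finset.range (2 * m), f k = ∑ s ∈ Finset.range m, f (2 * s + 1) := by
  intro m
  induction m with
  | zero => simp
  | succ t ih =>
    have h1 : 2 * (t + 1) = (2 * t + 1) + 1 := by omega
    rw [h1, Finset.sum_range_succ, Finset.sum_range_succ, ih, Finset.sum_range_succ,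
      hf (2 * t) ⟨t, by ring⟩]
    ring

/-- The logarithm of `B(x) = Σ_{m≥0} C_𝕊(n,2m)/(2^m m!) x^{2m}` is
`B_c(x) = Σ_{m≥1} ((2^m−1)n+1)/(2m) · x^{2m}`; equivalently `B = exp B_c`,
expressed coefficientwise (`coeff_p (exp S) = Σ_j coeff_p (S^j)/j!` for a
series `S` with zero constant term). -/
theorem spin_factor_connected_genfn (n : ℚ)
    (B Bc : PowerSeries ℚ)
    (hB : ∀ k : ℕ, PowerSeries.coeff (R := ℚ) k B =
      if Even k then CSq n (k / 2) / ((2 : ℚ) ^ (k / 2) * ((k / 2).factorial : ℚ)) else 0)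
    (hBc : ∀ k : ℕ, PowerSeries.coeff (R := ℚ) k Bc =
      if k ≠ 0 ∧ Even k then (((2 : ℚ) ^ (k / 2) - 1) * n + 1) / (k : ℚ) else 0) :
    ∀ p : ℕ, PowerSeries.coeff (R := ℚ) p B =
      ∑ j ∈ Finset.range (p + 1), PowerSeries.coeff (R := ℚ) p (Bc ^ j) / (j.factorial : ℚ) := by
  have hc : PowerSeries.constantCoeff (R := ℚ) Bc = 0 := by
    have h := hBc 0
    simp at h
    exact h
  have hw : ∀ b : ℕ, PowerSeries.coeff (R := ℚ) (b + 1) Bc * ((b : ℚ) + 1) = wQ n (b + 1) := by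
    intro b
    rw [hBc (b + 1), wQ]
    by_cases hcond : ((b + 1 : ℕ) ≠ 0 ∧ Even (b + 1))
    · rw [if_pos hcond, if_pos hcond, cQ]
      have hb1 : ((b : ℚ) + 1) ≠ 0 := by positivity
      push_cast
      field_simp
    · rw [if_neg hcond, if_neg hcond]
      ring
  have hbrec : ∀ p : ℕ, ((p : ℚ) + 1) * PowerSeries.coeff (R := ℚ) (p + 1) B
      = ∑ k ∈ Finset.range (p + 1), wQ n (k + 1) * PowerSeries.coeff (R := ℚ) (p - k) B := by
    intro p
    rcases Nat.even_or_odd p with hep | hop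
    · have hodd : ¬ Even (p + 1) := by simp [Nat.even_add_one, hep]
      rw [hB (p + 1), if_neg hodd, mul_zero]
      symm
      apply Finset.sum_eq_zero
      intro k hk
      have hk' : k ≤ p := by simp at hk; omega
      by_cases hke : Even (k + 1)
      · have hno : ¬ Even (p - k) := by
          rcases hep with ⟨a, ha⟩
          rcases hke with ⟨c, hc2⟩
          rw [Nat.even_iff]
          omega
        rw [hB (p - k), if_neg hno, mul_zero]
      · rw [wQ, if_neg (by tauto), zero_mul]
    · obtain ⟨t, rfl⟩ := hop
      have hL : PowerSeries.coeff (R := ℚ) (2 * t + 1 + 1) B = betaQ n (t + 1) := by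
        rw [hB, if_pos ⟨t + 1, by omega⟩, show (2 * t + 1 + 1) / 2 = t + 1 by omega, betaQ]
      rw [hL]
      have hR : (∑ k ∈ Finset.range (2 * t + 1 + 1),
            wQ n (k + 1) * PowerSeries.coeff (R := ℚ) (2 * t + 1 - k) B)
          = ∑ s ∈ Finset.range (t + 1), cQ n (s + 1) * betaQ n (t - s) := by
        rw [show 2 * t + 1 + 1 = 2 * (t + 1) by omega]
        rw [sum_odd_only _ ?hvan (t + 1)]
        case hvan =>
          intro k hke
          rw [wQ, if_neg, zero_mul]
          rintro ⟨h1', h2'⟩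
          exact (Nat.even_add_one.mp h2') hke
        apply Finset.sum_congr rfl
        intro s hs
        have hs' : s ≤ t := by simp at hs; omega
        have h1 : wQ n (2 * s + 1 + 1) = cQ n (s + 1) := by
          rw [wQ, if_pos ⟨by omega, ⟨s + 1, by omega⟩⟩, show (2 * s + 1 + 1) / 2 = s + 1 by omega]
        have h2 : PowerSeries.coeff (R := ℚ) (2 * t + 1 - (2 * s + 1)) B = betaQ n (t - s) := by
          rw [show 2 * t + 1 - (2 * s + 1) = 2 * (t - s) by omega, hB,
            if_pos ⟨t - s, by omega⟩, show (2 * (t - s)) / 2 = t - s by omega, betaQ]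
        rw [h1, h2]
      rw [hR]
      have hstar := star n (t + 1)
      have hconv : (∑ s ∈ Finset.range (t + 1), cQ n (s + 1) * betaQ n (t + 1 - (s + 1)))
          = ∑ s ∈ Finset.range (t + 1), cQ n (s + 1) * betaQ n (t - s) := by
        apply Finset.sum_congr rfl
        intro s hs
        rw [show t + 1 - (s + 1) = t - s by omega]
      rw [hconv] at hstar
      rw [← hstar]
      push_cast
      ring
  have key : ∀ q : ℕ, PowerSeries.coeff (R := ℚ) q B = eS Bc q := by
    intro q
    induction q using Nat.strong_induction_on with
    | _ q ih =>
      match q with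
      | 0 =>
        rw [hB 0, if_pos Even.zero, eS]
        simp [CSq_zero]
      | (q + 1) =>
        have h1 := hbrec q
        have h2 := e_rec n hc hw q
        have h3 : (∑ k ∈ Finset.range (q + 1), wQ n (k + 1) * PowerSeries.coeff (R := ℚ) (q - k) B)
            = ∑ k ∈ Finset.range (q + 1), wQ n (k + 1) * eS Bc (q - k) := by
          apply Finset.sum_congr rfl
          intro k hk
          rw [ih (q - k) (by omega)]
        have hq : ((q : ℚ) + 1) ≠ 0 := by positivity
        apply mul_left_cancel₀ hq
        rw [h1, h3, ← h2]
  exact key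
end

section
/- For every even k = 2m ≥ 2, the coefficient of n^{m−1} (the codegree-one coefficient) of the polynomial C_𝕊(n,k) = ⟨Tr x^k⟩_{𝕊_{1,n}} equals the m-th octagonal number m(3m−2) = 2·C(m,2) + C(2m,2). -/
open Polynomial

/-- The polynomial `C_𝕊(n,2m) = Σ_{i+j=2m, i,j even} C(2m,i)·(i−1)!!·∏_{l=0}^{j/2−1}(n+2l)`
(writing `i = 2i'`), as a polynomial in `n`. -/
noncomputable def CSpoly (m : ℕ) : Polynomial ℚ :=
  ∑ i ∈ Finset.range (m + 1),
    C (((2 * m).choose (2 * i) : ℚ) * (Nat.doubleFactorial (2 * i - 1) : ℚ)) *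
      ∏ l ∈ Finset.range (m - i), (X + C (2 * l : ℚ))

noncomputable def Pj (j : ℕ) : Polynomial ℚ := ∏ l ∈ Finset.range j, (X + C (2 * l : ℚ))

lemma Pj_monic (j : ℕ) : (Pj j).Monic :=
  monic_prod_of_monic _ _ fun _ _ => monic_X_add_C _

lemma Pj_natDegree (j : ℕ) : (Pj j).natDegree = j := by
  rw [Pj, natDegree_prod_of_monic _ _ fun _ _ => monic_X_add_C _]
  simp only [natDegree_X_add_C, Finset.sum_const, smul_eq_mul, mul_one, Finset.card_range]

lemma Pj_coeff_pred (j : ℕ) (hj : 1 ≤ j) :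
    (Pj j).coeff (j - 1) = ((j * (j - 1) : ℕ) : ℚ) := by
  have h1 : (Pj j).coeff (j - 1) = (Pj j).nextCoeff := by
    rw [nextCoeff_of_natDegree_pos (by rw [Pj_natDegree]; omega), Pj_natDegree]
  rw [h1, Pj, Monic.nextCoeff_prod _ _ fun _ _ => monic_X_add_C _]
  simp only [nextCoeff_X_add_C]
  have := Finset.sum_range_id_mul_two j
  have h2 : ∑ l ∈ Finset.range j, (2 * l : ℚ) = ((∑ l ∈ Finset.range j, l) * 2 : ℕ) := by
    push_cast; rw [Finset.sum_mul]; ring_nf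
  rw [h2, this]

/-- For `k = 2m ≥ 2`, the codegree-one coefficient of `C_𝕊(n,k)` is the `m`-th
octagonal number `m(3m−2) = 2·C(m,2) + C(2m,2)`. -/
theorem spin_factor_codegree_one_octagonal (m : ℕ) (hm : 1 ≤ m) :
    (CSpoly m).coeff (m - 1) = ((m * (3 * m - 2) : ℕ) : ℚ) ∧
    m * (3 * m - 2) = 2 * m.choose 2 + (2 * m).choose 2 := by
  obtain ⟨n, rfl⟩ : ∃ n, m = n + 1 := ⟨m - 1, by omega⟩
  set m := n + 1 with hmdef
  have hch : (2 * m).choose 2 = m * (2 * m - 1) := by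
    rw [Nat.choose_two_right, show 2 * m * (2 * m - 1) = m * (2 * m - 1) * 2 by ring]
    exact Nat.mul_div_cancel _ two_pos
  have hch2 : 2 * m.choose 2 = m * (m - 1) := by
    rw [Nat.choose_two_right, show m * (m - 1) = n * (n + 1) by simp [hmdef]; ring]
    exact Nat.two_mul_div_two_of_even (Nat.even_mul_succ_self n)
  have hkey : m * (3 * m - 2) = m * (m - 1) + m * (2 * m - 1) := by
    simp only [hmdef, show 3 * (n + 1) - 2 = 3 * n + 1 from by omega,
      show (n + 1) - 1 = n from by omega, show 2 * (n + 1) - 1 = 2 * n + 1 from by omega]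
    ring
  constructor
  · have key : (CSpoly m).coeff (m - 1) =
        ∑ i ∈ Finset.range (m + 1),
          (((2 * m).choose (2 * i) : ℚ) * (Nat.doubleFactorial (2 * i - 1) : ℚ)) *
            (Pj (m - i)).coeff (m - 1) := by
      rw [CSpoly, finset_sum_coeff]
      exact Finset.sum_congr rfl fun i _ => coeff_C_mul _
    rw [key, Finset.sum_eq_add_of_mem 0 1 (by simp) (by simp; omega) (by norm_num)
      (fun k hk h => ?_)]
    · have e0 : (Pj (m - 0)).coeff (m - 1) = ((m * (m - 1) : ℕ) : ℚ) := by
        rw [Nat.sub_zero]; exact Pj_coeff_pred m (by omega)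
      have e1 : (Pj (m - 1)).coeff (m - 1) = 1 := by
        have := (Pj_monic (m - 1)).coeff_natDegree
        rwa [Pj_natDegree] at this
      rw [e0, e1, hkey]
      have hdf0 : Nat.doubleFactorial (2 * 0 - 1) = 1 := rfl
      have hdf1 : Nat.doubleFactorial (2 * 1 - 1) = 1 := rfl
      rw [hdf0, hdf1, Nat.mul_zero, Nat.choose_zero_right, hch]
      push_cast
      ring
    · have hdeg : (Pj (m - k)).natDegree < m - 1 := by
        rw [Pj_natDegree]
        simp only [Finset.mem_range] at hk
        omega
      rw [coeff_eq_zero_of_natDegree_lt hdeg, mul_zero]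
  · omega
end

section
/- For every even k = 2m, the polynomial C_𝕊(n,k) = ⟨Tr x^k⟩_{𝕊_{1,n}} is a monic polynomial in n of degree m whose constant term is the Wick number (2m−1)!!. -/
open Polynomial

lemma CS_prod_monic (k : ℕ) : (∏ l ∈ Finset.range k, (X + C (2 * l : ℚ))).Monic :=
  monic_prod_of_monic _ _ fun _ _ => monic_X_add_C _

lemma CS_prod_natDegree (k : ℕ) :
    (∏ l ∈ Finset.range k, (X + C (2 * l : ℚ))).natDegree = k := by
  rw [natDegree_prod]
  · simp only [natDegree_X_add_C, Finset.sum_const, smul_eq_mul, mul_one,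
      Finset.card_range]
  · intro i _
    exact (monic_X_add_C _).ne_zero

lemma CSpoly_eq (m : ℕ) :
    CSpoly m = (∑ i ∈ Finset.range m,
      C (((2 * m).choose (2 * (i + 1)) : ℚ) *
        (Nat.doubleFactorial (2 * (i + 1) - 1) : ℚ)) *
        ∏ l ∈ Finset.range (m - (i + 1)), (X + C (2 * l : ℚ))) +
      ∏ l ∈ Finset.range m, (X + C (2 * l : ℚ)) := by
  rw [CSpoly, Finset.sum_range_succ']
  simp

lemma CS_degree_C_mul_le (c : ℚ) (p : Polynomial ℚ) : (C c * p).degree ≤ p.degree := by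
  rcases eq_or_ne c 0 with h | h
  · simp [h]
  · rw [degree_mul, degree_C h, zero_add]

lemma CS_rest_degree_lt (m : ℕ) :
    (∑ i ∈ Finset.range m,
      C (((2 * m).choose (2 * (i + 1)) : ℚ) *
        (Nat.doubleFactorial (2 * (i + 1) - 1) : ℚ)) *
        ∏ l ∈ Finset.range (m - (i + 1)), (X + C (2 * l : ℚ))).degree <
      (∏ l ∈ Finset.range m, (X + C (2 * l : ℚ))).degree := by
  rw [degree_eq_natDegree (CS_prod_monic m).ne_zero, CS_prod_natDegree]
  refine lt_of_le_of_lt (degree_sum_le _ _) ?_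
  rw [Finset.sup_lt_iff (by exact_mod_cast WithBot.bot_lt_coe m)]
  intro i hi
  refine lt_of_le_of_lt (CS_degree_C_mul_le _ _) ?_
  rw [degree_eq_natDegree (CS_prod_monic _).ne_zero, CS_prod_natDegree]
  exact_mod_cast Nat.cast_lt.mpr (Nat.sub_lt_of_pos_le (Nat.succ_pos i)
    (Finset.mem_range.mp hi))

/-- For every even `k = 2m`, `C_𝕊(n,k)` is a monic polynomial in `n` of degree `m`
whose constant term is the Wick number `(2m−1)!!`. -/
theorem spin_factor_monic_constant_wick (m : ℕ) :
    (CSpoly m).Monic ∧ (CSpoly m).natDegree = m ∧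
    (CSpoly m).coeff 0 = (Nat.doubleFactorial (2 * m - 1) : ℚ) := by
  refine ⟨?_, ?_, ?_⟩
  · rw [CSpoly_eq]
    exact (CS_prod_monic m).add_of_right (CS_rest_degree_lt m)
  · rw [CSpoly_eq]
    rw [natDegree_add_eq_right_of_degree_lt (CS_rest_degree_lt m), CS_prod_natDegree]
  · rw [coeff_zero_eq_eval_zero, CSpoly, eval_finset_sum]
    rw [Finset.sum_eq_single m]
    · simp
    · intro i hi hne
      have him : i < m := lt_of_le_of_ne (Nat.lt_succ_iff.mp (Finset.mem_range.mp hi)) hne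
      have : m - i ≠ 0 := Nat.sub_ne_zero_of_lt him
      simp only [eval_mul, eval_C, eval_prod, eval_add, eval_X]
      rw [Finset.prod_eq_zero (Finset.mem_range.mpr (Nat.pos_of_ne_zero this))]
      · ring
      · simp
    · intro h
      exact absurd (Finset.self_mem_range_succ m) h
end
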